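/- Let T = k[x,y,z,w]/(xy+zw), let I = (x,w) and J = (x,z) be the ideals of T generated by the indicated classes. The T-linear map g : T² → T, g(a,b) = ax + bz, has image J, and its kernel is isomorphic to I as a T-module; hence there is a short exact sequence of T-modules 0 → I → T² → J → 0. -/

import Mathlib

set_option synthInstance.maxHeartbeats 1000000
set_option maxHeartbeats 1000000

noncomputable section

/-- `T = k[x,y,z,w]/(xy+zw)`, with `x = X 0`, `y = X 1`, `z = X 2`, `w = X 3`. -/
abbrev T (k : Type*) [Field k] : Type _ :=
  MvPolynomial (Fin 4) k ⧸
    Ideal.span {(MvPolynomial.X 0 : MvPolynomial (Fin 4) k) * MvPolynomial.X 1 +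
      MvPolynomial.X 2 * MvPolynomial.X 3}

/-- The class of `x` in `T`. -/
abbrev xT (k : Type*) [Field k] : T k := Ideal.Quotient.mk _ (MvPolynomial.X 0)

/-- The class of `y` in `T`. -/
abbrev yT (k : Type*) [Field k] : T k := Ideal.Quotient.mk _ (MvPolynomial.X 1)

/-- The class of `z` in `T`. -/
abbrev zT (k : Type*) [Field k] : T k := Ideal.Quotient.mk _ (MvPolynomial.X 2)

/-- The class of `w` in `T`. -/
abbrev wT (k : Type*) [Field k] : T k := Ideal.Quotient.mk _ (MvPolynomial.X 3)

/-- The `T`-linear map `g : T² → T`, `g(a,b) = ax + bz`. -/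
def gT (k : Type*) [Field k] : (T k × T k) →ₗ[T k] T k :=
  xT k • LinearMap.fst _ _ _ + zT k • LinearMap.snd _ _ _

namespace Stmt15Aux

open MvPolynomial

variable {k : Type*} [Field k]

lemma primeX0 : Prime (X 0 : MvPolynomial (Fin 4) k) := by
  rw [← MulEquiv.prime_iff (MvPolynomial.finSuccEquiv k 3).toMulEquiv]
  have : (MvPolynomial.finSuccEquiv k 3).toMulEquiv (X 0) = Polynomial.X :=
    MvPolynomial.finSuccEquiv_X_zero
  rw [this]
  exact Polynomial.prime_X

/-- If `f ∣ A * X 0` then `f ∣ A`, where `f = X0*X1 + X2*X3`. -/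
lemma dvd_of_dvd_mul_X0 (A : MvPolynomial (Fin 4) k)
    (h : (X 0 * X 1 + X 2 * X 3 : MvPolynomial (Fin 4) k) ∣ A * X 0) :
    (X 0 * X 1 + X 2 * X 3 : MvPolynomial (Fin 4) k) ∣ A := by
  obtain ⟨q, hq⟩ := h
  have h2 : (X 0 : MvPolynomial (Fin 4) k) ∣ q * X 2 * X 3 :=
    ⟨A - q * X 1, by linear_combination -hq⟩
  have h3 : (X 0 : MvPolynomial (Fin 4) k) ∣ q := by
    rcases primeX0.2.2 _ _ h2 with h | h
    · rcases primeX0.2.2 _ _ h with h | h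
      · exact h
      · exact absurd (X_dvd_X.mp h) (by decide)
    · exact absurd (X_dvd_X.mp h) (by decide)
  obtain ⟨q', rfl⟩ := h3
  refine ⟨q', ?_⟩
  have hx : (X 0 : MvPolynomial (Fin 4) k) ≠ 0 := X_ne_zero 0
  apply mul_left_cancel₀ hx
  linear_combination hq

/-- If `f ∣ A * X0 + B * X2` then `B` is in `(X0, X3)` modulo `f`. -/
lemma exists_of_dvd (A B : MvPolynomial (Fin 4) k)
    (h : (X 0 * X 1 + X 2 * X 3 : MvPolynomial (Fin 4) k) ∣ A * X 0 + B * X 2) :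
    ∃ q c : MvPolynomial (Fin 4) k, B = q * X 3 + X 0 * c := by
  obtain ⟨q, hq⟩ := h
  have h2 : (X 0 : MvPolynomial (Fin 4) k) ∣ (B - q * X 3) * X 2 :=
    ⟨q * X 1 - A, by linear_combination hq⟩
  have h3 : (X 0 : MvPolynomial (Fin 4) k) ∣ B - q * X 3 := by
    rcases primeX0.2.2 _ _ h2 with h | h
    · exact h
    · exact absurd (X_dvd_X.mp h) (by decide)
  obtain ⟨c, hc⟩ := h3
  exact ⟨q, c, by linear_combination hc⟩

end Stmt15Aux

/-- The map `g : T² → T`, `g(a,b) = ax + bz`, has image the ideal `J = (x,z)`, and its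
kernel is isomorphic to `I = (x,w)` as a `T`-module; hence there is a short exact sequence
`0 → I → T² → J → 0`. -/
theorem stmt15 (k : Type*) [Field k] [IsAlgClosed k] [CharZero k] :
    (∀ a b : T k, gT k (a, b) = a * xT k + b * zT k) ∧
    LinearMap.range (gT k) = (Ideal.span {xT k, zT k} : Ideal (T k)) ∧
    Nonempty (LinearMap.ker (gT k) ≃ₗ[T k] ↥(Ideal.span {xT k, wT k})) := by
  classical
  have hg : ∀ a b : T k, gT k (a, b) = a * xT k + b * zT k := by
    intro a b
    simp [gT, mul_comm]
  refine ⟨hg, ?_, ?_⟩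
  · apply le_antisymm
    · rintro _ ⟨⟨a, b⟩, rfl⟩
      rw [hg]
      exact Ideal.add_mem _
        (Ideal.mul_mem_left _ _ (Ideal.subset_span (by simp)))
        (Ideal.mul_mem_left _ _ (Ideal.subset_span (by simp)))
    · rw [Ideal.span_le]
      rintro t ht
      simp only [Set.mem_insert_iff, Set.mem_singleton_iff] at ht
      rcases ht with rfl | rfl
      · exact ⟨(1, 0), by rw [hg]; ring⟩
      · exact ⟨(0, 1), by rw [hg]; ring⟩
  · set e : LinearMap.ker (gT k) →ₗ[T k] T k :=
      (LinearMap.snd (T k) (T k) (T k)).comp (LinearMap.ker (gT k)).subtype with he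
    have hker : LinearMap.ker e = ⊥ := by
      rw [LinearMap.ker_eq_bot']
      rintro ⟨⟨a, b⟩, hab⟩ hb
      have hb' : b = 0 := hb
      subst hb'
      have hab' : gT k (a, 0) = 0 := LinearMap.mem_ker.mp hab
      rw [hg] at hab'
      obtain ⟨A, rfl⟩ := Ideal.Quotient.mk_surjective a
      have h0 : Ideal.Quotient.mk
          (Ideal.span {(MvPolynomial.X 0 : MvPolynomial (Fin 4) k) * MvPolynomial.X 1 +
            MvPolynomial.X 2 * MvPolynomial.X 3}) (A * MvPolynomial.X 0) = 0 := by
        rw [map_mul]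
        simpa using hab'
      have hdvd := Ideal.mem_span_singleton.mp (Ideal.Quotient.eq_zero_iff_mem.mp h0)
      have hA : (Ideal.Quotient.mk _ A : T k) = 0 :=
        Ideal.Quotient.eq_zero_iff_mem.mpr
          (Ideal.mem_span_singleton.mpr (Stmt15Aux.dvd_of_dvd_mul_X0 A hdvd))
      exact Subtype.ext (by simp [hA])
    have hrange : LinearMap.range e = (Ideal.span {xT k, wT k} : Ideal (T k)) := by
      apply le_antisymm
      · rintro _ ⟨⟨⟨a, b⟩, hab⟩, rfl⟩
        have hab' : gT k (a, b) = 0 := LinearMap.mem_ker.mp hab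
        rw [hg] at hab'
        obtain ⟨A, rfl⟩ := Ideal.Quotient.mk_surjective a
        obtain ⟨B, rfl⟩ := Ideal.Quotient.mk_surjective b
        have h0 : Ideal.Quotient.mk
            (Ideal.span {(MvPolynomial.X 0 : MvPolynomial (Fin 4) k) * MvPolynomial.X 1 +
              MvPolynomial.X 2 * MvPolynomial.X 3})
            (A * MvPolynomial.X 0 + B * MvPolynomial.X 2) = 0 := by
          rw [map_add, map_mul, map_mul]
          exact hab'
        have hdvd := Ideal.mem_span_singleton.mp (Ideal.Quotient.eq_zero_iff_mem.mp h0)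
        obtain ⟨q, c, hc⟩ := Stmt15Aux.exists_of_dvd A B hdvd
        show (Ideal.Quotient.mk _ B : T k) ∈ _
        rw [hc, map_add, map_mul, map_mul]
        exact Ideal.add_mem _
          (Ideal.mul_mem_left _ _ (Ideal.subset_span (by simp)))
          (Ideal.mul_mem_right _ _ (Ideal.subset_span (by simp)))
      · rw [Ideal.span_le]
        rintro t ht
        simp only [Set.mem_insert_iff, Set.mem_singleton_iff] at ht
        rcases ht with rfl | rfl
        · exact ⟨⟨(-(zT k), xT k), LinearMap.mem_ker.mpr (by rw [hg]; ring)⟩, rfl⟩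
        · refine ⟨⟨(yT k, wT k), LinearMap.mem_ker.mpr ?_⟩, rfl⟩
          rw [hg]
          have : yT k * xT k + wT k * zT k = Ideal.Quotient.mk _
              ((MvPolynomial.X 0 : MvPolynomial (Fin 4) k) * MvPolynomial.X 1 +
                MvPolynomial.X 2 * MvPolynomial.X 3) := by
            rw [map_add, map_mul, map_mul]
            ring
          rw [this, Ideal.Quotient.eq_zero_iff_mem]
          exact Ideal.subset_span rfl
    exact ⟨(LinearEquiv.ofInjective e (LinearMap.ker_eq_bot.mp hker)).trans
      (LinearEquiv.ofEq _ _ hrange)⟩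

end
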